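/- Let 0 < a < b and c < d. Then the measure (x²/a² − 1/6) dx dy is a Steffensen-Popoviciu measure on the rectangle [−a, b] × [c, d]; that is, its total mass is positive and ∫_{−a}^{b} ∫_{c}^{d} h(x,y) (x²/a² − 1/6) dy dx ≥ 0 for every continuous convex function h : [−a,b] × [c,d] → [0,∞). -/

import Mathlib

open MeasureTheory intervalIntegral

lemma cubic_anti (a c0 : ℝ) (ha : a ≠ 0) (x : ℝ) :
    HasDerivAt (fun x : ℝ => c0 * (x ^ 3 / (3 * a ^ 2) - x / 6))
      (c0 * (x ^ 2 / a ^ 2 - 1 / 6)) x := by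
  have h := (((hasDerivAt_pow 3 x).div_const (3 * a ^ 2)).sub
      ((hasDerivAt_id x).div_const 6)).const_mul c0
  refine h.congr_deriv ?_
  field_simp
  ring

lemma quartic_anti (a c1 : ℝ) (ha : a ≠ 0) (x : ℝ) :
    HasDerivAt (fun x : ℝ => c1 * (x ^ 4 / (4 * a ^ 2) - x ^ 2 / 12))
      (c1 * x * (x ^ 2 / a ^ 2 - 1 / 6)) x := by
  have h := (((hasDerivAt_pow 4 x).div_const (4 * a ^ 2)).sub
      ((hasDerivAt_pow 2 x).div_const 12)).const_mul c1
  refine h.congr_deriv ?_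
  field_simp
  ring

lemma line_anti (a c0 c1 : ℝ) (ha : a ≠ 0) (x : ℝ) :
    HasDerivAt (fun x : ℝ => c0 * (x ^ 3 / (3 * a ^ 2) - x / 6)
        + c1 * (x ^ 4 / (4 * a ^ 2) - x ^ 2 / 12))
      ((c0 + c1 * x) * (x ^ 2 / a ^ 2 - 1 / 6)) x := by
  have h := (cubic_anti a c0 ha x).add (quartic_anti a c1 ha x)
  refine h.congr_deriv ?_
  ring

lemma w_cont (a : ℝ) : Continuous fun x : ℝ => x ^ 2 / a ^ 2 - 1 / 6 :=
  ((continuous_pow 2).div_const _).sub continuous_const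

lemma line_integral (a c0 c1 : ℝ) (ha : 0 < a) :
    ∫ x in (-a)..a, (c0 + c1 * x) * (x ^ 2 / a ^ 2 - 1 / 6) = c0 * (a / 3) := by
  rw [intervalIntegral.integral_eq_sub_of_hasDerivAt
    (fun x _ => line_anti a c0 c1 ha.ne' x)
    (((continuous_const.add (continuous_const.mul continuous_id)).mul
      (w_cont a)).intervalIntegrable _ _)]
  field_simp
  ring

set_option maxHeartbeats 1000000 in
lemma oneD_key (a b : ℝ) (ha : 0 < a) (hab : a < b) (g : ℝ → ℝ)
    (hgv : ConvexOn ℝ (Set.Icc (-a) b) g) :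
    ∀ x ∈ Set.Icc (-a) a,
      ((g (a / Real.sqrt 6) + g (-(a / Real.sqrt 6))) / 2
        + (g (a / Real.sqrt 6) - g (-(a / Real.sqrt 6))) / (2 * (a / Real.sqrt 6)) * x)
        * (x ^ 2 / a ^ 2 - 1 / 6) ≤ g x * (x ^ 2 / a ^ 2 - 1 / 6) := by
  set r : ℝ := a / Real.sqrt 6 with hrdef
  have h6 : (1:ℝ) < Real.sqrt 6 := by
    rw [show (1:ℝ) = Real.sqrt 1 by simp]
    exact Real.sqrt_lt_sqrt (by norm_num) (by norm_num)
  have hr : 0 < r := div_pos ha (by linarith)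
  have hra : r < a := div_lt_self ha h6
  have hr2 : r ^ 2 = a ^ 2 / 6 := by
    rw [hrdef, div_pow, Real.sq_sqrt (by norm_num : (0:ℝ) ≤ 6)]
  have hmr : -r ∈ Set.Icc (-a) b := ⟨by linarith, by linarith⟩
  have hpr : r ∈ Set.Icc (-a) b := ⟨by linarith, by linarith⟩
  set c0 : ℝ := (g r + g (-r)) / 2 with hc0
  set c1 : ℝ := (g r - g (-r)) / (2 * r) with hc1
  have ha6 : a ^ 2 / 6 / a ^ 2 = 1 / 6 := by field_simp; try ring
  intro x hx
  have hxmem : x ∈ Set.Icc (-a) b := ⟨hx.1, by linarith [hx.2]⟩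
  have hL : 2 * r * (c0 + c1 * x) = (r + x) * g r + (r - x) * g (-r) := by
    rw [hc0, hc1]; field_simp; try ring
  rcases le_total (x ^ 2) (r ^ 2) with hcase | hcase
  · -- |x| ≤ r : weight ≤ 0, g ≤ L
    have hx1 : -r ≤ x := by nlinarith
    have hx2 : x ≤ r := by nlinarith
    have hwle : x ^ 2 / a ^ 2 - 1 / 6 ≤ 0 := by
      have h1 : x ^ 2 / a ^ 2 ≤ (a ^ 2 / 6) / a ^ 2 :=
        div_le_div_of_nonneg_right (by rw [← hr2]; exact hcase) (by positivity)
      rw [ha6] at h1; linarith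
    have ht0 : (0:ℝ) ≤ (r - x) / (2 * r) := div_nonneg (by linarith) (by linarith)
    have hs0 : (0:ℝ) ≤ (x + r) / (2 * r) := div_nonneg (by linarith) (by linarith)
    have hts : (r - x) / (2 * r) + (x + r) / (2 * r) = 1 := by field_simp; try ring
    have hcv := hgv.2 hmr hpr ht0 hs0 hts
    simp only [smul_eq_mul] at hcv
    have hpt : (r - x) / (2 * r) * (-r) + (x + r) / (2 * r) * r = x := by
      field_simp; try ring
    rw [hpt] at hcv
    have h2 : 2 * r * ((r - x) / (2 * r) * g (-r) + (x + r) / (2 * r) * g r)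
        = (r + x) * g r + (r - x) * g (-r) := by field_simp; try ring
    have h5 : 2 * r * g x ≤ 2 * r * (c0 + c1 * x) := by
      have h6' := mul_le_mul_of_nonneg_left hcv (by linarith : (0:ℝ) ≤ 2 * r)
      rw [h2] at h6'; rw [hL]; linarith
    exact mul_le_mul_of_nonpos_right (le_of_mul_le_mul_left h5 (by linarith)) hwle
  · -- r ≤ |x| : weight ≥ 0, L ≤ g
    have hwge : 0 ≤ x ^ 2 / a ^ 2 - 1 / 6 := by
      have h1 : (a ^ 2 / 6) / a ^ 2 ≤ x ^ 2 / a ^ 2 :=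
        div_le_div_of_nonneg_right (by rw [← hr2]; exact hcase) (by positivity)
      rw [ha6] at h1; linarith
    have hgge : c0 + c1 * x ≤ g x := by
      rcases le_total 0 x with hx0 | hx0
      · have hxr : r ≤ x := by nlinarith
        have hden : (0:ℝ) < x + r := by linarith
        have ht0 : (0:ℝ) ≤ (x - r) / (x + r) := div_nonneg (by linarith) hden.le
        have hs0 : (0:ℝ) ≤ 2 * r / (x + r) := div_nonneg (by linarith) hden.le
        have hts : (x - r) / (x + r) + 2 * r / (x + r) = 1 := by field_simp; try ring
        have hcv := hgv.2 hmr hxmem ht0 hs0 hts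
        simp only [smul_eq_mul] at hcv
        have hpt : (x - r) / (x + r) * (-r) + 2 * r / (x + r) * x = r := by
          field_simp; try ring
        rw [hpt] at hcv
        have h3 : (x + r) * ((x - r) / (x + r) * g (-r) + 2 * r / (x + r) * g x)
            = (x - r) * g (-r) + 2 * r * g x := by field_simp; try ring
        have h2 := mul_le_mul_of_nonneg_left hcv hden.le
        rw [h3] at h2
        have h4 : 2 * r * (c0 + c1 * x) ≤ 2 * r * g x := by rw [hL]; linarith
        exact le_of_mul_le_mul_left h4 (by linarith)
      · have hxr : x ≤ -r := by nlinarith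
        have hden : (0:ℝ) < r - x := by linarith
        have ht0 : (0:ℝ) ≤ 2 * r / (r - x) := div_nonneg (by linarith) hden.le
        have hs0 : (0:ℝ) ≤ (-r - x) / (r - x) := div_nonneg (by linarith) hden.le
        have hts : 2 * r / (r - x) + (-r - x) / (r - x) = 1 := by field_simp; try ring
        have hcv := hgv.2 hxmem hpr ht0 hs0 hts
        simp only [smul_eq_mul] at hcv
        have hpt : 2 * r / (r - x) * x + (-r - x) / (r - x) * r = -r := by
          field_simp; try ring
        rw [hpt] at hcv
        have h3 : (r - x) * (2 * r / (r - x) * g x + (-r - x) / (r - x) * g r)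
            = 2 * r * g x + (-r - x) * g r := by field_simp; try ring
        have h2 := mul_le_mul_of_nonneg_left hcv hden.le
        rw [h3] at h2
        have h4 : 2 * r * (c0 + c1 * x) ≤ 2 * r * g x := by rw [hL]; linarith
        exact le_of_mul_le_mul_left h4 (by linarith)
    exact mul_le_mul_of_nonneg_right hgge hwge

lemma oneD (a b : ℝ) (ha : 0 < a) (hab : a < b) (g : ℝ → ℝ)
    (hgc : ContinuousOn g (Set.Icc (-a) b))
    (hgv : ConvexOn ℝ (Set.Icc (-a) b) g)
    (hg0 : ∀ x ∈ Set.Icc (-a) b, 0 ≤ g x) :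
    0 ≤ ∫ x in (-a)..b, g x * (x ^ 2 / a ^ 2 - 1 / 6) := by
  set r : ℝ := a / Real.sqrt 6 with hrdef
  have h6 : (1:ℝ) < Real.sqrt 6 := by
    rw [show (1:ℝ) = Real.sqrt 1 by simp]
    exact Real.sqrt_lt_sqrt (by norm_num) (by norm_num)
  have hr : 0 < r := div_pos ha (by linarith)
  have hra : r < a := div_lt_self ha h6
  have hmr : -r ∈ Set.Icc (-a) b := ⟨by linarith, by linarith⟩
  have hpr : r ∈ Set.Icc (-a) b := ⟨by linarith, by linarith⟩
  set c0 : ℝ := (g r + g (-r)) / 2 with hc0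
  set c1 : ℝ := (g r - g (-r)) / (2 * r) with hc1
  have hc0nn : 0 ≤ c0 := by
    have h1 := hg0 _ hmr; have h2 := hg0 _ hpr
    rw [hc0]; linarith
  have hIcc1 : Set.uIcc (-a) a ⊆ Set.Icc (-a) b := by
    rw [Set.uIcc_of_le (by linarith)]
    exact Set.Icc_subset_Icc le_rfl (by linarith)
  have hIcc2 : Set.uIcc a b ⊆ Set.Icc (-a) b := by
    rw [Set.uIcc_of_le (by linarith)]
    exact Set.Icc_subset_Icc (by linarith) le_rfl
  have hInt1 : IntervalIntegrable (fun x => g x * (x ^ 2 / a ^ 2 - 1 / 6))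
      volume (-a) a :=
    ((hgc.mono hIcc1).mul (w_cont a).continuousOn).intervalIntegrable
  have hInt2 : IntervalIntegrable (fun x => g x * (x ^ 2 / a ^ 2 - 1 / 6))
      volume a b :=
    ((hgc.mono hIcc2).mul (w_cont a).continuousOn).intervalIntegrable
  have hIntL : IntervalIntegrable (fun x => (c0 + c1 * x) * (x ^ 2 / a ^ 2 - 1 / 6))
      volume (-a) a :=
    (((continuous_const.add (continuous_const.mul continuous_id)).mul
      (w_cont a)).continuousOn).intervalIntegrable
  have hsplit := intervalIntegral.integral_add_adjacent_intervals hInt1 hInt2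
  rw [← hsplit]
  have hpart2 : 0 ≤ ∫ x in a..b, g x * (x ^ 2 / a ^ 2 - 1 / 6) := by
    apply intervalIntegral.integral_nonneg (by linarith)
    intro u hu
    have hu1 : u ∈ Set.Icc (-a) b := ⟨by linarith [hu.1], hu.2⟩
    have hw : 0 ≤ u ^ 2 / a ^ 2 - 1 / 6 := by
      have h1 : (1:ℝ) ≤ u ^ 2 / a ^ 2 := by
        rw [le_div_iff₀ (by positivity)]
        nlinarith [hu.1]
      linarith
    exact mul_nonneg (hg0 u hu1) hw
  have hpart1 : c0 * (a / 3) ≤ ∫ x in (-a)..a, g x * (x ^ 2 / a ^ 2 - 1 / 6) := by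
    rw [← line_integral a c0 c1 ha]
    exact intervalIntegral.integral_mono_on (by linarith) hIntL hInt1
      (oneD_key a b ha hab g hgv)
  have : (0:ℝ) ≤ c0 * (a / 3) := by positivity
  linarith

/-- Example 2 (second part): for `0 < a < b` and `c < d`, the measure
`(x²/a² − 1/6) dx dy` is a Steffensen–Popoviciu measure on the rectangle
`[−a, b] × [c, d]`: its total mass is positive and it integrates every
continuous convex `h : [−a, b] × [c, d] → [0, ∞)` to a nonnegative number. -/
theorem quadratic_weight_SP_measure_rectangle
    (a b c d : ℝ) (ha : 0 < a) (hab : a < b) (hcd : c < d) :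
    (0 < ∫ x in (-a)..b, ∫ _y in c..d, (x ^ 2 / a ^ 2 - 1 / 6)) ∧
      ∀ h : ℝ × ℝ → ℝ,
        ContinuousOn h (Set.Icc (-a) b ×ˢ Set.Icc c d) →
        ConvexOn ℝ (Set.Icc (-a) b ×ˢ Set.Icc c d) h →
        (∀ z ∈ Set.Icc (-a) b ×ˢ Set.Icc c d, 0 ≤ h z) →
        0 ≤ ∫ x in (-a)..b, ∫ y in c..d, h (x, y) * (x ^ 2 / a ^ 2 - 1 / 6) := by
  have hb : 0 < b := lt_trans ha hab
  constructor
  · -- positivity of total mass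
    simp only [intervalIntegral.integral_const, smul_eq_mul]
    rw [intervalIntegral.integral_eq_sub_of_hasDerivAt
      (fun x _ => cubic_anti a (d - c) ha.ne' x)
      ((continuous_const.mul (w_cont a)).intervalIntegrable _ _)]
    have key : 0 < 2 * (a ^ 3 + b ^ 3) - a ^ 2 * (a + b) := by
      nlinarith [mul_pos hb (mul_pos (sub_pos.2 hab) (by linarith : (0:ℝ) < a + b)),
        mul_pos (mul_pos ha ha) ha]
    have heq : (d - c) * (b ^ 3 / (3 * a ^ 2) - b / 6)
        - (d - c) * ((-a) ^ 3 / (3 * a ^ 2) - -a / 6)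
        = (d - c) * ((2 * (a ^ 3 + b ^ 3) - a ^ 2 * (a + b)) / (6 * a ^ 2)) := by
      field_simp; ring
    rw [heq]
    exact mul_pos (by linarith) (div_pos key (by positivity))
  · intro h hch hcv hnn
    have huIoc : Set.Ioc c d ⊆ Set.Icc c d := Set.Ioc_subset_Icc_self
    have hcy : ∀ x ∈ Set.Icc (-a) b, ContinuousOn (fun y => h (x, y)) (Set.Icc c d) :=
      fun x hx => hch.comp (Continuous.continuousOn (by continuity))
        (fun y hy => Set.mk_mem_prod hx hy)
    have hcx : ∀ y ∈ Set.Icc c d, ContinuousOn (fun x => h (x, y)) (Set.Icc (-a) b) :=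
      fun y hy => hch.comp (Continuous.continuousOn (by continuity))
        (fun x hx => Set.mk_mem_prod hx hy)
    have hIy : ∀ x ∈ Set.Icc (-a) b, IntervalIntegrable (fun y => h (x, y)) volume c d := by
      intro x hx
      apply ContinuousOn.intervalIntegrable
      rw [Set.uIcc_of_le hcd.le]
      exact hcy x hx
    set g : ℝ → ℝ := fun x => ∫ y in c..d, h (x, y) with hg
    have hgcont : ContinuousOn g (Set.Icc (-a) b) := by
      intro x₀ hx₀
      obtain ⟨C, hC⟩ := (isCompact_Icc.prod isCompact_Icc).exists_bound_of_continuousOn hch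
      apply intervalIntegral.continuousWithinAt_of_dominated_interval
        (bound := fun _ => C)
      · filter_upwards [self_mem_nhdsWithin] with x hx
        exact ((hcy x hx).mono
          (by rw [Set.uIoc_of_le hcd.le]; exact huIoc)).aestronglyMeasurable
          measurableSet_uIoc
      · filter_upwards [self_mem_nhdsWithin] with x hx
        refine Filter.Eventually.of_forall fun y hy => ?_
        exact hC (x, y) ⟨hx, huIoc (by rwa [Set.uIoc_of_le hcd.le] at hy)⟩
      · exact intervalIntegrable_const
      · refine Filter.Eventually.of_forall fun y hy => ?_
        have hyIcc : y ∈ Set.Icc c d := huIoc (by rwa [Set.uIoc_of_le hcd.le] at hy)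
        exact hcx y hyIcc x₀ hx₀
    have hgconv : ConvexOn ℝ (Set.Icc (-a) b) g := by
      refine ⟨convex_Icc _ _, ?_⟩
      intro x₁ hx₁ x₂ hx₂ t s ht hs hts
      simp only [smul_eq_mul]
      have hmid : t * x₁ + s * x₂ ∈ Set.Icc (-a) b := by
        have := (convex_Icc (-a) b) hx₁ hx₂ ht hs hts
        simpa [smul_eq_mul] using this
      have step : g (t * x₁ + s * x₂) ≤ t * g x₁ + s * g x₂ := by
        have hle : ∫ y in c..d, h (t * x₁ + s * x₂, y)
            ≤ ∫ y in c..d, (t * h (x₁, y) + s * h (x₂, y)) := by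
          apply intervalIntegral.integral_mono_on hcd.le (hIy _ hmid)
            (((hIy _ hx₁).const_mul t).add ((hIy _ hx₂).const_mul s))
          intro y hy
          have hyy : t * y + s * y = y := by rw [← add_mul, hts, one_mul]
          have hpt : (t * x₁ + s * x₂, y) = t • ((x₁, y) : ℝ × ℝ) + s • (x₂, y) := by
            rw [Prod.smul_mk, Prod.smul_mk, Prod.mk_add_mk]
            simp only [smul_eq_mul]
            rw [hyy]
          have h2 := hcv.2 (Set.mk_mem_prod hx₁ hy) (Set.mk_mem_prod hx₂ hy) ht hs hts
          simp only [smul_eq_mul] at h2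
          rw [← hpt] at h2
          exact h2
        have heq2 : ∫ y in c..d, (t * h (x₁, y) + s * h (x₂, y))
            = t * g x₁ + s * g x₂ := by
          rw [intervalIntegral.integral_add ((hIy _ hx₁).const_mul t)
            ((hIy _ hx₂).const_mul s), intervalIntegral.integral_const_mul,
            intervalIntegral.integral_const_mul]
        rw [← heq2]; exact hle
      exact step
    have hgnn : ∀ x ∈ Set.Icc (-a) b, 0 ≤ g x := fun x hx =>
      intervalIntegral.integral_nonneg hcd.le (fun y hy => hnn (x, y) (Set.mk_mem_prod hx hy))
    have hmain := oneD a b ha hab g hgcont hgconv hgnn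
    simpa only [hg, intervalIntegral.integral_mul_const] using hmain
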